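/- Let G be a finite connected k-regular simple graph with k ≥ 1. Any candy-passing game on G with at least (2k−1)·|V(G)| candies eventually reaches a fixed configuration. -/

import Mathlib

open Finset

/-- One round of the candy-passing game: each vertex holding at least its degree
passes one candy to each neighbor. -/
def candyRound {V : Type*} [Fintype V] [DecidableEq V]
    (G : SimpleGraph V) [DecidableRel G.Adj] (a : V → ℕ) : V → ℕ :=
  fun v => (if G.degree v ≤ a v then a v - G.degree v else a v) +
    ((G.neighborFinset v).filter fun u => G.degree u ≤ a u).card

section Aux

variable {V : Type*} [Fintype V] [DecidableEq V]
  (G : SimpleGraph V) [DecidableRel G.Adj] {k : ℕ}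

lemma cp_step (hreg : G.IsRegularOfDegree k) (a : V → ℕ) (v : V) :
    candyRound G a v + k * (if k ≤ a v then 1 else 0)
      = a v + ∑ u ∈ G.neighborFinset v, (if k ≤ a u then 1 else 0) := by
  have hcard : ((G.neighborFinset v).filter fun u => G.degree u ≤ a u).card
      = ∑ u ∈ G.neighborFinset v, (if k ≤ a u then 1 else 0) := by
    rw [Finset.card_filter]
    exact Finset.sum_congr rfl fun u _ => by rw [hreg u]
  unfold candyRound
  rw [hreg v, hcard]
  rcases le_or_gt k (a v) with h | h
  · rw [if_pos h, if_pos h]; omega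
  · rw [if_neg (not_le.mpr h), if_neg (not_le.mpr h)]; omega

lemma cp_nb_card (hreg : G.IsRegularOfDegree k) (v : V) :
    (G.neighborFinset v).card = k := by
  rw [G.card_neighborFinset_eq_degree, hreg v]

lemma cp_r_le (hreg : G.IsRegularOfDegree k) (a : V → ℕ) (v : V) :
    ∑ u ∈ G.neighborFinset v, (if k ≤ a u then 1 else 0) ≤ k := by
  have h := Finset.sum_le_card_nsmul (G.neighborFinset v)
    (fun u => if k ≤ a u then 1 else 0) 1 (fun u _ => by (try dsimp only); split <;> omega)
  rw [cp_nb_card G hreg, smul_eq_mul, mul_one] at h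
  exact h

lemma cp_double (hreg : G.IsRegularOfDegree k) (g : V → ℕ) :
    ∑ v, ∑ u ∈ G.neighborFinset v, g u = ∑ u, k * g u := by
  have h1 : ∀ v : V, ∑ u ∈ G.neighborFinset v, g u
      = ∑ u, if G.Adj v u then g u else 0 := fun v => by
    rw [SimpleGraph.neighborFinset_eq_filter, Finset.sum_filter]
  simp only [h1]
  rw [Finset.sum_comm]
  refine Finset.sum_congr rfl fun u _ => ?_
  rw [← Finset.sum_filter, Finset.sum_const, smul_eq_mul]
  congr 1
  have h2 : (univ.filter fun v => G.Adj v u) = G.neighborFinset u := by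
    rw [SimpleGraph.neighborFinset_eq_filter]
    exact Finset.filter_congr fun x _ => by rw [G.adj_comm]
  rw [h2, cp_nb_card G hreg]

lemma cp_conserve (hreg : G.IsRegularOfDegree k) (a : V → ℕ) :
    ∑ v, candyRound G a v = ∑ v, a v := by
  have h1 : ∑ v, (candyRound G a v + k * (if k ≤ a v then 1 else 0))
      = ∑ v, (a v + ∑ u ∈ G.neighborFinset v, (if k ≤ a u then 1 else 0)) :=
    Finset.sum_congr rfl fun v _ => cp_step G hreg a v
  rw [Finset.sum_add_distrib, Finset.sum_add_distrib,
    cp_double G hreg (fun u => if k ≤ a u then 1 else 0)] at h1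
  exact Nat.add_right_cancel h1

lemma cp_bound (hreg : G.IsRegularOfDegree k) {B : ℕ} (hB : 2 * k - 1 ≤ B)
    (a : V → ℕ) (ha : ∀ v, a v ≤ B) (v : V) : candyRound G a v ≤ B := by
  have hr : ((G.neighborFinset v).filter fun u => G.degree u ≤ a u).card ≤ k := by
    refine le_trans (Finset.card_filter_le _ _) ?_
    rw [cp_nb_card G hreg]
  have hv := ha v
  unfold candyRound
  rw [hreg v]
  split <;> omega

lemma cp_fixed (hreg : G.IsRegularOfDegree k) (a : V → ℕ) (h : ∀ v, k ≤ a v) :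
    candyRound G a = a := by
  funext v
  unfold candyRound
  have hfil : (G.neighborFinset v).filter (fun u => G.degree u ≤ a u)
      = G.neighborFinset v :=
    Finset.filter_true_of_mem fun u _ => by rw [hreg u]; exact h u
  rw [hreg v, hfil, cp_nb_card G hreg, if_pos (h v)]
  have := h v
  omega

lemma cp_conserve_iter (hreg : G.IsRegularOfDegree k) (a : V → ℕ) (t : ℕ) :
    ∑ v, (candyRound G)^[t] a v = ∑ v, a v := by
  induction t with
  | zero => simp
  | succ t ih => rw [Function.iterate_succ_apply', cp_conserve G hreg, ih]

lemma cp_periodic_fixed (hconn : G.Connected) (hk : 1 ≤ k)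
    (hreg : G.IsRegularOfDegree k) (b : V → ℕ) (p : ℕ) (hp : 0 < p)
    (hper : (candyRound G)^[p] b = b)
    (htot : (2 * k - 1) * Fintype.card V ≤ ∑ v, b v) :
    candyRound G b = b := by
  set f := candyRound G with hf
  have hshift : ∀ t, f^[t + p] b = f^[t] b := fun t => by
    rw [Function.iterate_add_apply, hper]
  have hcyc : ∀ c t, f^[t + c * p] b = f^[t] b := by
    intro c
    induction c with
    | zero => simp
    | succ c ih =>
        intro t
        have he : t + (c + 1) * p = (t + c * p) + p := by ring
        rw [he, hshift, ih]
  have hmod : ∀ t, f^[t] b = f^[t % p] b := fun t => by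
    conv_lhs => rw [← Nat.mod_add_div' t p]
    exact hcyc (t / p) (t % p)
  -- number of times each vertex fires during one period
  set m : V → ℕ := fun v => ∑ t ∈ range p, (if k ≤ f^[t] b v then 1 else 0) with hm
  have hmle : ∀ v, m v ≤ p := by
    intro v
    have h := Finset.sum_le_card_nsmul (range p)
      (fun t => if k ≤ f^[t] b v then 1 else 0) 1 (fun t _ => by (try dsimp only); split <;> omega)
    rw [Finset.card_range, smul_eq_mul, mul_one] at h
    exact h
  have hbal : ∀ v, k * m v = ∑ u ∈ G.neighborFinset v, m u := by
    intro v
    have key : ∀ t, f^[t + 1] b v + k * (if k ≤ f^[t] b v then 1 else 0)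
        = f^[t] b v + ∑ u ∈ G.neighborFinset v, (if k ≤ f^[t] b u then 1 else 0) := by
      intro t
      rw [Function.iterate_succ_apply']
      exact cp_step G hreg (f^[t] b) v
    have hsum : ∑ t ∈ range p, (f^[t + 1] b v + k * (if k ≤ f^[t] b v then 1 else 0))
        = ∑ t ∈ range p,
          (f^[t] b v + ∑ u ∈ G.neighborFinset v, (if k ≤ f^[t] b u then 1 else 0)) :=
      Finset.sum_congr rfl fun t _ => key t
    rw [Finset.sum_add_distrib, Finset.sum_add_distrib, ← Finset.mul_sum,
      Finset.sum_comm] at hsum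
    have h1 : ∑ t ∈ range (p + 1), f^[t] b v
        = ∑ t ∈ range p, f^[t + 1] b v + b v :=
      Finset.sum_range_succ' (fun t => f^[t] b v) p
    have h2 : ∑ t ∈ range (p + 1), f^[t] b v
        = ∑ t ∈ range p, f^[t] b v + b v := by
      have := Finset.sum_range_succ (fun t => f^[t] b v) p
      rwa [hper] at this
    have hAB : ∑ t ∈ range p, f^[t + 1] b v = ∑ t ∈ range p, f^[t] b v :=
      Nat.add_right_cancel (h1.symm.trans h2)
    rw [hAB] at hsum
    exact Nat.add_left_cancel hsum
  by_cases hA : ∃ v, m v = p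
  · -- some vertex fires every step; by connectivity all do, so b is fixed
    obtain ⟨v₀, hv₀⟩ := hA
    have hclosed : ∀ v, m v = p → ∀ u, G.Adj v u → m u = p := by
      intro v hv u hu
      by_contra hne
      have hlt : m u < p := lt_of_le_of_ne (hmle u) hne
      have hlt2 : ∑ w ∈ G.neighborFinset v, m w < ∑ w ∈ G.neighborFinset v, p :=
        Finset.sum_lt_sum (fun w _ => hmle w)
          ⟨u, (G.mem_neighborFinset v u).mpr hu, hlt⟩
      rw [Finset.sum_const, smul_eq_mul, cp_nb_card G hreg, ← hbal v, hv] at hlt2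
      exact absurd hlt2 (lt_irrefl _)
    have hwalk : ∀ {x y : V}, G.Walk x y → m x = p → m y = p := by
      intro x y W
      induction W with
      | nil => exact id
      | cons h W ih => intro hx; exact ih (hclosed _ hx _ h)
    have hall : ∀ w, m w = p := by
      intro w
      obtain ⟨W⟩ := hconn.preconnected v₀ w
      exact hwalk W hv₀
    have hfire0 : ∀ v, k ≤ b v := by
      intro v
      by_contra hlt
      have h0 : (if k ≤ f^[0] b v then 1 else 0) = 0 := if_neg hlt
      have hsplit : ∑ t ∈ (range p).erase 0, (if k ≤ f^[t] b v then 1 else 0)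
          + (if k ≤ f^[0] b v then 1 else 0)
          = ∑ t ∈ range p, (if k ≤ f^[t] b v then 1 else 0) :=
        Finset.sum_erase_add (range p) _ (Finset.mem_range.mpr hp)
      have hle : ∑ t ∈ (range p).erase 0, (if k ≤ f^[t] b v then 1 else 0)
          ≤ ((range p).erase 0).card := by
        have h := Finset.sum_le_card_nsmul ((range p).erase 0)
          (fun t => if k ≤ f^[t] b v then 1 else 0) 1 (fun t _ => by (try dsimp only); split <;> omega)
        simpa using h
      have hcard : ((range p).erase 0).card = p - 1 := by
        rw [Finset.card_erase_of_mem (Finset.mem_range.mpr hp), Finset.card_range]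
      have hmv : ∑ t ∈ range p, (if k ≤ f^[t] b v then 1 else 0) = p := hall v
      omega
    exact cp_fixed G hreg b hfire0
  · -- no vertex fires every step: contradiction with the candy total
    exfalso
    push_neg at hA
    have hBlt : ∀ v, m v < p := fun v => lt_of_le_of_ne (hmle v) (hA v)
    have hVne : Nonempty V := hconn.nonempty
    have hne : ((range p) ×ˢ (univ : Finset V)).Nonempty := by
      obtain ⟨v⟩ := hVne
      exact ⟨(0, v), Finset.mem_product.mpr ⟨Finset.mem_range.mpr hp, Finset.mem_univ v⟩⟩
    obtain ⟨⟨t₀, v₀⟩, hmem, hMeq⟩ :=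
      Finset.exists_mem_eq_sup ((range p) ×ˢ (univ : Finset V)) hne
        (fun q => f^[q.1] b q.2)
    set M := ((range p) ×ˢ (univ : Finset V)).sup (fun q => f^[q.1] b q.2) with hMdef
    have hMax : ∀ t v, f^[t] b v ≤ M := by
      intro t v
      rw [hmod t]
      exact Finset.le_sup (f := fun q => f^[q.1] b q.2) (b := (t % p, v))
        (Finset.mem_product.mpr ⟨Finset.mem_range.mpr (Nat.mod_lt t hp), Finset.mem_univ v⟩)
    by_cases hM : M ≤ 2 * k - 1
    · -- every value is small, but some vertex is below k at some time: total too small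
      obtain ⟨vs⟩ := hVne
      have hex : ∃ t < p, ¬ k ≤ f^[t] b vs := by
        by_contra hc
        push_neg at hc
        have h1 : m vs = ∑ t ∈ range p, 1 :=
          Finset.sum_congr rfl fun t ht => if_pos (hc t (Finset.mem_range.mp ht))
        have : m vs = p := by rw [h1]; simp
        exact absurd this (hA vs)
      obtain ⟨t, htp, hvs⟩ := hex
      have hcons := cp_conserve_iter G hreg b t
      have hb1 : ∀ v, f^[t] b v ≤ 2 * k - 1 := fun v => le_trans (hMax t v) hM
      have hsplit := Finset.sum_erase_add univ (fun v => f^[t] b v) (Finset.mem_univ vs)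
      have hle : ∑ v ∈ univ.erase vs, f^[t] b v
          ≤ (Fintype.card V - 1) * (2 * k - 1) := by
        have h := Finset.sum_le_card_nsmul (univ.erase vs)
          (fun v => f^[t] b v) (2 * k - 1) (fun v _ => hb1 v)
        rwa [Finset.card_erase_of_mem (Finset.mem_univ vs), Finset.card_univ,
          smul_eq_mul] at h
      have hn1 : 1 ≤ Fintype.card V := Fintype.card_pos_iff.mpr hconn.nonempty
      have hx : f^[t] b vs ≤ k - 1 := by omega
      have h1 : (2 * k - 1) * Fintype.card V
          ≤ (Fintype.card V - 1) * (2 * k - 1) + (k - 1) := by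
        calc (2 * k - 1) * Fintype.card V ≤ ∑ v, b v := htot
          _ = ∑ v, f^[t] b v := hcons.symm
          _ = ∑ v ∈ univ.erase vs, f^[t] b v + f^[t] b vs := hsplit.symm
          _ ≤ (Fintype.card V - 1) * (2 * k - 1) + (k - 1) := Nat.add_le_add hle hx
      have key : (Fintype.card V - 1) * (2 * k - 1) + (2 * k - 1)
          = (2 * k - 1) * Fintype.card V := by
        obtain ⟨n', hn'⟩ : ∃ n', Fintype.card V = n' + 1 :=
          ⟨Fintype.card V - 1, by omega⟩
        rw [hn', Nat.add_sub_cancel]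
        ring
      have h2 : (2 * k - 1) * Fintype.card V < (2 * k - 1) * Fintype.card V := by
        calc (2 * k - 1) * Fintype.card V
            ≤ (Fintype.card V - 1) * (2 * k - 1) + (k - 1) := h1
          _ < (Fintype.card V - 1) * (2 * k - 1) + (2 * k - 1) :=
            Nat.add_lt_add_left (by omega) _
          _ = (2 * k - 1) * Fintype.card V := key
      exact absurd h2 (lt_irrefl _)
    · -- a value ≥ 2k exists: it persists backwards forever, so that vertex always fires
      push_neg at hM
      have hM2 : 2 * k ≤ M := by omega
      have ht0 : f^[t₀] b v₀ = M := hMeq.symm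
      have back : ∀ t, f^[t + 1] b v₀ = M → f^[t] b v₀ = M := by
        intro t h
        have hstep : f^[t + 1] b v₀ + k * (if k ≤ f^[t] b v₀ then 1 else 0)
            = f^[t] b v₀
              + ∑ u ∈ G.neighborFinset v₀, (if k ≤ f^[t] b u then 1 else 0) := by
          rw [Function.iterate_succ_apply']
          exact cp_step G hreg (f^[t] b) v₀
        have hr := cp_r_le G hreg (f^[t] b) v₀
        have hb := hMax t v₀
        by_cases hfi : k ≤ f^[t] b v₀
        · rw [if_pos hfi, h] at hstep; omega
        · rw [if_neg hfi, h] at hstep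
          push_neg at hfi
          omega
      have desc : ∀ d t, f^[t + d] b v₀ = M → f^[t] b v₀ = M := by
        intro d
        induction d with
        | zero => intro t h; exact h
        | succ d ih =>
            intro t h
            have h' : f^[(t + 1) + d] b v₀ = M := by
              rw [show (t + 1) + d = t + (d + 1) by omega]; exact h
            exact back t (ih (t + 1) h')
      have hall : ∀ t, f^[t] b v₀ = M := by
        intro t
        have h1 : f^[t₀ + t * p] b v₀ = M := by rw [hcyc t t₀]; exact ht0
        have hle' : t ≤ t₀ + t * p := by
          have : t * 1 ≤ t * p := Nat.mul_le_mul_left t hp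
          omega
        refine desc (t₀ + t * p - t) t ?_
        rw [show t + (t₀ + t * p - t) = t₀ + t * p by omega]
        exact h1
      have hmp : m v₀ = p := by
        have h1 : m v₀ = ∑ t ∈ range p, 1 :=
          Finset.sum_congr rfl fun t _ => if_pos (by rw [hall t]; omega)
        rw [h1]; simp
      exact absurd hmp (hA v₀)

end Aux

theorem candy_passing_regular_stabilizes {V : Type*} [Fintype V] [DecidableEq V]
    (G : SimpleGraph V) [DecidableRel G.Adj] (hconn : G.Connected)
    (k : ℕ) (hk : 1 ≤ k) (hreg : G.IsRegularOfDegree k) (a₀ : V → ℕ)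
    (htot : (2 * k - 1) * Fintype.card V ≤ ∑ v, a₀ v) :
    ∃ N : ℕ, ∀ n ≥ N, (candyRound G)^[n] a₀ = (candyRound G)^[N] a₀ := by
  set f := candyRound G with hf
  set B := (univ.sup a₀) + 2 * k with hB
  have hbound : ∀ n v, f^[n] a₀ v ≤ B := by
    intro n
    induction n with
    | zero =>
        intro v
        exact le_trans (Finset.le_sup (Finset.mem_univ v)) (Nat.le_add_right _ _)
    | succ n ih =>
        intro v
        rw [Function.iterate_succ_apply']
        exact cp_bound G hreg (by omega) _ ih v
  obtain ⟨i, j, hij, hgij⟩ := Finite.exists_ne_map_eq_of_infinite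
    (fun n : ℕ => fun v => (⟨f^[n] a₀ v, Nat.lt_succ_of_le (hbound n v)⟩ : Fin (B + 1)))
  have heq : f^[i] a₀ = f^[j] a₀ := by
    funext v
    exact congrArg Fin.val (congrFun hgij v)
  have main : ∀ i j : ℕ, i < j → f^[i] a₀ = f^[j] a₀ →
      ∃ N : ℕ, ∀ n ≥ N, f^[n] a₀ = f^[N] a₀ := by
    intro i j hlt heqij
    have hp : 0 < j - i := by omega
    have hper : f^[j - i] (f^[i] a₀) = f^[i] a₀ := by
      rw [← Function.iterate_add_apply, show (j - i) + i = j by omega]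
      exact heqij.symm
    have htot' : (2 * k - 1) * Fintype.card V ≤ ∑ v, f^[i] a₀ v := by
      rw [cp_conserve_iter G hreg a₀ i]
      exact htot
    have hfix := cp_periodic_fixed G hconn hk hreg (f^[i] a₀) (j - i) hp hper htot'
    refine ⟨i, fun n hn => ?_⟩
    obtain ⟨d, rfl⟩ := Nat.exists_eq_add_of_le hn
    rw [show i + d = d + i by omega, Function.iterate_add_apply,
      Function.iterate_fixed hfix]
  rcases lt_or_gt_of_ne hij with h | h
  · exact main i j h heq
  · exact main j i h heq.symm
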